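/- Let L be a bounded lattice, D ⊆ L, and f : D → L a monotone partial function. Then there is a bounded lattice L' such that L is a bounded sublattice of L' and there is a unary polynomial function p on L' with p(a) = f(a) for all a ∈ D. Moreover, if L is a complete lattice, then L' can be chosen to be a complete lattice which is an end extension of L, i.e., for all b ∈ L' and all a ∈ L with a ≠ ⊤, if b ≤ a then b ∈ L. -/

import Mathlib

universe u

/-- `IsPolyFn L n p` says that `p : (Fin n → L) → L` is an `n`-ary lattice polynomial
function on `L`. -/
inductive IsPolyFn (L : Type u) [Lattice L] (n : ℕ) : ((Fin n → L) → L) → Prop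
  | proj (i : Fin n) : IsPolyFn L n fun x => x i
  | const (c : L) : IsPolyFn L n fun _ => c
  | sup {p q : (Fin n → L) → L} : IsPolyFn L n p → IsPolyFn L n q →
      IsPolyFn L n fun x => p x ⊔ q x
  | inf {p q : (Fin n → L) → L} : IsPolyFn L n p → IsPolyFn L n q →
      IsPolyFn L n fun x => p x ⊓ q x

/-- `e` is a bounded lattice embedding: an injective map preserving `⊔`, `⊓`, `⊥`, `⊤`. -/
def IsBddLatticeEmbedding {L M : Type u} [Lattice L] [BoundedOrder L]
    [Lattice M] [BoundedOrder M] (e : L → M) : Prop :=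
  Function.Injective e ∧ (∀ x y, e (x ⊔ y) = e x ⊔ e y) ∧
    (∀ x y, e (x ⊓ y) = e x ⊓ e y) ∧ e ⊥ = ⊥ ∧ e ⊤ = ⊤

/-- Order-theoretic completeness: every subset has a least upper bound and a greatest
lower bound. -/
def OrderComplete (M : Type u) [Lattice M] : Prop :=
  ∀ S : Set M, (∃ a, IsLUB S a) ∧ ∃ a, IsGLB S a


inductive Srt | e0 | z1 | w1 | y1 | z2 | w2 | y2 | t
deriving DecidableEq

instance : Fintype Srt :=
  ⟨{Srt.e0, Srt.z1, Srt.w1, Srt.y1, Srt.z2, Srt.w2, Srt.y2, Srt.t}, fun x => by cases x <;> simp⟩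

open Srt in
def Srt.leB : Srt → Srt → Bool
  | .e0, _ => true
  | _, .t => true
  | .z1, .z1 => true | .z1, .w1 => true | .z1, .y1 => true
  | .w1, .w1 => true
  | .y1, .y1 => true
  | .z2, .z2 => true | .z2, .w2 => true | .z2, .y2 => true
  | .w2, .w2 => true
  | .y2, .y2 => true
  | _, _ => false

instance : LE Srt := ⟨fun a b => Srt.leB a b = true⟩
instance : DecidableRel (α := Srt) (· ≤ ·) := fun a b => inferInstanceAs (Decidable (Srt.leB a b = true))

instance : PartialOrder Srt where
  le_refl := by decide
  le_trans := by decide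
  le_antisymm := by decide

def Srt.infS : Srt → Srt → Srt := fun a b =>
  if a ≤ b then a else if b ≤ a then b else
  match a, b with
  | .w1, .y1 => .z1 | .y1, .w1 => .z1
  | .w2, .y2 => .z2 | .y2, .w2 => .z2
  | _, _ => .e0

def Srt.supS : Srt → Srt → Srt := fun a b =>
  if a ≤ b then b else if b ≤ a then a else
  match a, b with
  | .w1, .y1 => .t | .y1, .w1 => .t
  | .w2, .y2 => .t | .y2, .w2 => .t
  | _, _ => .t

instance : Lattice Srt where
  inf := Srt.infS
  sup := Srt.supS
  inf_le_left := by decide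
  inf_le_right := by decide
  le_inf := by decide
  le_sup_left := by decide
  le_sup_right := by decide
  sup_le := by decide

instance : BoundedOrder Srt where
  top := Srt.t
  bot := Srt.e0
  le_top := by decide
  bot_le := by decide

noncomputable instance : CompleteLattice Srt := Fintype.toCompleteLattice Srt

example : True := trivial

-- decide lemmas on Srt
lemma s_bot : ∀ s : Srt, Srt.e0 ≤ s := by decide
lemma s_top : ∀ s : Srt, s ≤ Srt.t := by decide
lemma s_le_e0 : ∀ s : Srt, s ≤ Srt.e0 → s = Srt.e0 := by decide
lemma s_w1_le : ∀ s : Srt, Srt.w1 ≤ s → s = Srt.w1 ∨ s = Srt.t := by decide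
lemma s_z1y1 : ∀ s : Srt, Srt.z1 ≤ s → Srt.y1 ≤ s → s = Srt.y1 ∨ s = Srt.t := by decide
lemma s_z2y2 : ∀ s : Srt, Srt.z2 ≤ s → Srt.y2 ≤ s → s = Srt.y2 ∨ s = Srt.t := by decide
lemma s_y1y2 : ∀ s : Srt, s ≤ Srt.y1 → s ≤ Srt.y2 → s = Srt.e0 := by decide
lemma s_ne_t : ∀ s s' : Srt, s ≤ s' → s' ≠ Srt.t → s ≠ Srt.t := by decide
lemma s_w_le : ∀ s : Srt, (Srt.w1 ≤ s ∨ Srt.w2 ≤ s) → (s = Srt.w1 ∨ s = Srt.w2 ∨ s = Srt.t) := by decide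
lemma s_y_le : ∀ s : Srt, (Srt.y1 ≤ s ∨ Srt.y2 ≤ s) → (s = Srt.y1 ∨ s = Srt.y2 ∨ s = Srt.t) := by decide

section CoreN

variable {L : Type u} [Lattice L] [BoundedOrder L]

/-- validity predicate for elements of the extension -/
def NValid (F : L → L) (x : Srt × L × L) : Prop :=
  (x.2.2 = ⊤ → x.1 = Srt.t) ∧ (x.1 = Srt.t → x.2.1 = ⊤ ∧ x.2.2 = ⊤) ∧
  (x.1 = Srt.e0 → x.2.1 = ⊥) ∧
  ((x.1 = Srt.w1 ∨ x.1 = Srt.w2) → x.2.1 = x.2.2) ∧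
  ((x.1 = Srt.y1 ∨ x.1 = Srt.y2) → F x.2.1 ≤ x.2.2)

def NN (F : L → L) : Type u := {x : Srt × L × L // NValid F x}

variable {F : L → L}

instance : PartialOrder (NN F) := inferInstanceAs (PartialOrder {x : Srt × L × L // NValid F x})

lemma NN.le_iff (x y : NN F) :
    x ≤ y ↔ x.1.1 ≤ y.1.1 ∧ x.1.2.1 ≤ y.1.2.1 ∧ x.1.2.2 ≤ y.1.2.2 := by
  change x.1 ≤ y.1 ↔ _
  rw [Prod.le_def, Prod.le_def]

lemma NN.mk_le_iff {a b : Srt × L × L} {ha : NValid F a} {hb : NValid F b} :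
    (⟨a, ha⟩ : NN F) ≤ ⟨b, hb⟩ ↔ a.1 ≤ b.1 ∧ a.2.1 ≤ b.2.1 ∧ a.2.2 ≤ b.2.2 :=
  NN.le_iff _ _

def TOPN (F : L → L) : NN F :=
  ⟨(Srt.t, ⊤, ⊤), fun _ => rfl, fun _ => ⟨rfl, rfl⟩,
    fun h => Srt.noConfusion h,
    fun h => by rcases h with h | h <;> exact Srt.noConfusion h,
    fun h => by rcases h with h | h <;> exact Srt.noConfusion h⟩

lemma le_TOPN (x : NN F) : x ≤ TOPN F := by
  rw [NN.le_iff]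
  exact ⟨s_top _, le_top, le_top⟩

lemma eq_TOPN_of_gamma_top {x : NN F} (h : x.1.2.2 = ⊤) : x = TOPN F := by
  have h1 := x.2.1 h
  have h2 := x.2.2.1 h1
  apply Subtype.ext
  have : x.1 = (Srt.t, ⊤, ⊤) := by
    rcases x with ⟨⟨s, b, g⟩, hv⟩
    simp only at h1 h2 h ⊢
    rw [h1, h2.1, h]
  exact this

open Classical in
noncomputable def eE (F : L → L) (a : L) : NN F :=
  if h : a = ⊤ then TOPN F else
    ⟨(Srt.e0, ⊥, a), fun hh => absurd hh h, fun hh => Srt.noConfusion hh,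
      fun _ => rfl,
      fun hh => by rcases hh with hh | hh <;> exact Srt.noConfusion hh,
      fun hh => by rcases hh with hh | hh <;> exact Srt.noConfusion hh⟩

lemma eE_top : eE F ⊤ = TOPN F := by simp [eE]

lemma eE_of_ne {a : L} (h : a ≠ ⊤) : (eE F a).1 = (Srt.e0, ⊥, a) := by
  simp [eE, h]

lemma eE_mono {a b : L} (h : a ≤ b) : eE F a ≤ eE F b := by
  by_cases hb : b = ⊤
  · rw [hb, eE_top]; exact le_TOPN _
  · have ha : a ≠ ⊤ := fun hh => hb (top_le_iff.mp (hh ▸ h))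
    rw [NN.le_iff, eE_of_ne ha, eE_of_ne hb]
    exact ⟨le_refl _, le_refl _, h⟩

end CoreN

section CoreN2

variable {L : Type u} [Lattice L] [BoundedOrder L] {F : L → L}

open Classical in
noncomputable def SInfData (F : L → L) (J : Set L → L) (T : Set (NN F)) : Srt × L × L :=
  if (∀ t ∈ T, t = TOPN F) then (Srt.t, ⊤, ⊤) else
    (sInf ((fun t : NN F => t.1.1) '' T),
     if sInf ((fun t : NN F => t.1.1) '' T) = Srt.e0 then ⊥
       else J ((fun t : NN F => t.1.2.1) '' T),
     J ((fun t : NN F => t.1.2.2) '' T))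

lemma SInfData_valid (hF : Monotone F) (J : Set L → L)
    (hJ : ∀ S : Set L, IsGLB S (J S)) (T : Set (NN F)) :
    NValid F (SInfData F J T) := by
  by_cases h : ∀ t ∈ T, t = TOPN F
  · simp only [SInfData, if_pos h]
    exact (TOPN F).2
  · simp only [SInfData, if_neg h]
    push_neg at h
    obtain ⟨t₀, ht₀, hne⟩ := h
    set s := sInf ((fun t : NN F => t.1.1) '' T) with hs
    set b := J ((fun t : NN F => t.1.2.1) '' T) with hb
    set g := J ((fun t : NN F => t.1.2.2) '' T) with hg
    have hsle : ∀ t ∈ T, s ≤ t.1.1 := fun t ht => sInf_le ⟨t, ht, rfl⟩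
    have hble : ∀ t ∈ T, b ≤ t.1.2.1 := fun t ht => (hJ _).1 ⟨t, ht, rfl⟩
    have hgle : ∀ t ∈ T, g ≤ t.1.2.2 := fun t ht => (hJ _).1 ⟨t, ht, rfl⟩
    have hst₀ : t₀.1.1 ≠ Srt.t := fun hh => hne (eq_TOPN_of_gamma_top (t₀.2.2.1 hh).2)
    have hsne : s ≠ Srt.t := s_ne_t _ _ (hsle t₀ ht₀) hst₀
    have hγ₀ : t₀.1.2.2 ≠ ⊤ := fun hh => hne (eq_TOPN_of_gamma_top hh)
    have hgne : g ≠ ⊤ := fun hh => hγ₀ (top_le_iff.mp (hh ▸ hgle t₀ ht₀))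
    refine ⟨fun hh => absurd hh hgne, fun hh => absurd hh hsne, ?_, ?_, ?_⟩
    · intro hh
      dsimp only at hh ⊢
      rw [if_pos hh]
    · intro hh
      dsimp only at hh ⊢
      have hse : s ≠ Srt.e0 := by rcases hh with h' | h' <;> (rw [h']; decide)
      rw [if_neg hse]
      have hcomp : ∀ t ∈ T, t.1.2.1 = t.1.2.2 := by
        intro t ht
        have hle := hsle t ht
        have h2 : Srt.w1 ≤ t.1.1 ∨ Srt.w2 ≤ t.1.1 := by
          rcases hh with h' | h'
          · exact Or.inl (h' ▸ hle)
          · exact Or.inr (h' ▸ hle)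
        rcases s_w_le _ h2 with h'' | h'' | h''
        · exact t.2.2.2.2.1 (Or.inl h'')
        · exact t.2.2.2.2.1 (Or.inr h'')
        · have h3 := t.2.2.1 h''
          rw [h3.1, h3.2]
      apply le_antisymm
      · refine (hJ _).2 ?_
        rintro x ⟨t, ht, rfl⟩
        dsimp only
        rw [← hcomp t ht]
        exact hble t ht
      · refine (hJ _).2 ?_
        rintro x ⟨t, ht, rfl⟩
        dsimp only
        rw [hcomp t ht]
        exact hgle t ht
    · intro hh
      dsimp only at hh ⊢
      have hse : s ≠ Srt.e0 := by rcases hh with h' | h' <;> (rw [h']; decide)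
      rw [if_neg hse]
      refine (hJ _).2 ?_
      rintro x ⟨t, ht, rfl⟩
      dsimp only
      have hle := hsle t ht
      have h2 : Srt.y1 ≤ t.1.1 ∨ Srt.y2 ≤ t.1.1 := by
        rcases hh with h' | h'
        · exact Or.inl (h' ▸ hle)
        · exact Or.inr (h' ▸ hle)
      rcases s_y_le _ h2 with h'' | h'' | h''
      · exact le_trans (hF (hble t ht)) (t.2.2.2.2.2 (Or.inl h''))
      · exact le_trans (hF (hble t ht)) (t.2.2.2.2.2 (Or.inr h''))
      · rw [(t.2.2.1 h'').2]
        exact le_top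


noncomputable def SInfN (hF : Monotone F) (J : Set L → L)
    (hJ : ∀ S : Set L, IsGLB S (J S)) (T : Set (NN F)) : NN F :=
  ⟨SInfData F J T, SInfData_valid hF J hJ T⟩

lemma SInfN_isGLB (hF : Monotone F) (J : Set L → L)
    (hJ : ∀ S : Set L, IsGLB S (J S)) (T : Set (NN F)) :
    IsGLB T (SInfN hF J hJ T) := by
  by_cases h : ∀ t ∈ T, t = TOPN F
  · have heq : SInfN hF J hJ T = TOPN F := Subtype.ext (by simp only [SInfN, SInfData, if_pos h]; rfl)
    constructor
    · intro t ht
      rw [heq, h t ht]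
    · intro ℓ _
      rw [heq]
      exact le_TOPN ℓ
  · have heq : (SInfN hF J hJ T).1 =
        (sInf ((fun t : NN F => t.1.1) '' T),
         if sInf ((fun t : NN F => t.1.1) '' T) = Srt.e0 then ⊥
           else J ((fun t : NN F => t.1.2.1) '' T),
         J ((fun t : NN F => t.1.2.2) '' T)) := by
      simp only [SInfN, SInfData, if_neg h]
    constructor
    · intro t ht
      rw [NN.le_iff, heq]
      dsimp only
      refine ⟨sInf_le ⟨t, ht, rfl⟩, ?_, (hJ _).1 ⟨t, ht, rfl⟩⟩
      split_ifs
      · exact bot_le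
      · exact (hJ _).1 ⟨t, ht, rfl⟩
    · intro ℓ hℓ
      rw [NN.le_iff, heq]
      dsimp only
      have hsort : ℓ.1.1 ≤ sInf ((fun t : NN F => t.1.1) '' T) := by
        refine le_sInf ?_
        rintro x ⟨t, ht, rfl⟩
        exact ((NN.le_iff ℓ t).1 (hℓ ht)).1
      refine ⟨hsort, ?_, ?_⟩
      · split_ifs with hse
        · rw [hse] at hsort
          rw [ℓ.2.2.2.1 (s_le_e0 _ hsort)]
        · refine (hJ _).2 ?_
          rintro x ⟨t, ht, rfl⟩
          exact ((NN.le_iff ℓ t).1 (hℓ ht)).2.1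
      · refine (hJ _).2 ?_
        rintro x ⟨t, ht, rfl⟩
        exact ((NN.le_iff ℓ t).1 (hℓ ht)).2.2

end CoreN2

section CoreN3

variable {L : Type u} [Lattice L] [BoundedOrder L] {F : L → L}

lemma eE_s {a : L} (h : a ≠ ⊤) : (eE F a).1.1 = Srt.e0 := by rw [eE_of_ne h]
lemma eE_b {a : L} (h : a ≠ ⊤) : (eE F a).1.2.1 = (⊥ : L) := by rw [eE_of_ne h]
lemma eE_g {a : L} (h : a ≠ ⊤) : (eE F a).1.2.2 = a := by rw [eE_of_ne h]

def mkN (s : Srt) (b g : L) (h1 : g = ⊤ → s = Srt.t) (h2 : s = Srt.t → b = ⊤ ∧ g = ⊤)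
    (h3 : s = Srt.e0 → b = ⊥) (h4 : (s = Srt.w1 ∨ s = Srt.w2) → b = g)
    (h5 : (s = Srt.y1 ∨ s = Srt.y2) → F b ≤ g) : NN F :=
  ⟨(s, b, g), h1, h2, h3, h4, h5⟩

/-- `w` elements -/
def wd1 (F : L → L) (d : L) (hd : d ≠ ⊤) : NN F :=
  mkN Srt.w1 d d (fun hh => absurd hh hd) (fun hh => Srt.noConfusion hh)
    (fun hh => Srt.noConfusion hh) (fun _ => rfl)
    (fun hh => by rcases hh with hh | hh <;> exact Srt.noConfusion hh)

def wd2 (F : L → L) (d : L) (hd : d ≠ ⊤) : NN F :=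
  mkN Srt.w2 d d (fun hh => absurd hh hd) (fun hh => Srt.noConfusion hh)
    (fun hh => Srt.noConfusion hh) (fun _ => rfl)
    (fun hh => by rcases hh with hh | hh <;> exact Srt.noConfusion hh)

/-- `z` elements -/
def zd1 (F : L → L) (hbt : (⊥ : L) ≠ ⊤) (d : L) : NN F :=
  mkN Srt.z1 d ⊥ (fun hh => absurd hh hbt) (fun hh => Srt.noConfusion hh)
    (fun hh => Srt.noConfusion hh)
    (fun hh => by rcases hh with hh | hh <;> exact Srt.noConfusion hh)
    (fun hh => by rcases hh with hh | hh <;> exact Srt.noConfusion hh)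

def zd2 (F : L → L) (hbt : (⊥ : L) ≠ ⊤) (d : L) : NN F :=
  mkN Srt.z2 d ⊥ (fun hh => absurd hh hbt) (fun hh => Srt.noConfusion hh)
    (fun hh => Srt.noConfusion hh)
    (fun hh => by rcases hh with hh | hh <;> exact Srt.noConfusion hh)
    (fun hh => by rcases hh with hh | hh <;> exact Srt.noConfusion hh)

/-- `y` elements -/
def yd1 (F : L → L) (d c : L) (hc : c ≠ ⊤) (hFc : F d ≤ c) : NN F :=
  mkN Srt.y1 d c (fun hh => absurd hh hc) (fun hh => Srt.noConfusion hh)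
    (fun hh => Srt.noConfusion hh)
    (fun hh => by rcases hh with hh | hh <;> exact Srt.noConfusion hh)
    (fun _ => hFc)

def yd2 (F : L → L) (d c : L) (hc : c ≠ ⊤) (hFc : F d ≤ c) : NN F :=
  mkN Srt.y2 d c (fun hh => absurd hh hc) (fun hh => Srt.noConfusion hh)
    (fun hh => Srt.noConfusion hh)
    (fun hh => by rcases hh with hh | hh <;> exact Srt.noConfusion hh)
    (fun _ => hFc)

@[simp] lemma wd1_val {d : L} (hd : d ≠ ⊤) : (wd1 F d hd).1 = (Srt.w1, d, d) := rfl
@[simp] lemma wd2_val {d : L} (hd : d ≠ ⊤) : (wd2 F d hd).1 = (Srt.w2, d, d) := rfl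
@[simp] lemma zd1_val (hbt : (⊥ : L) ≠ ⊤) (d : L) : (zd1 F hbt d).1 = (Srt.z1, d, ⊥) := rfl
@[simp] lemma zd2_val (hbt : (⊥ : L) ≠ ⊤) (d : L) : (zd2 F hbt d).1 = (Srt.z2, d, ⊥) := rfl
@[simp] lemma yd1_val {d c : L} (hc : c ≠ ⊤) (hFc : F d ≤ c) :
    (yd1 F d c hc hFc).1 = (Srt.y1, d, c) := rfl
@[simp] lemma yd2_val {d c : L} (hc : c ≠ ⊤) (hFc : F d ≤ c) :
    (yd2 F d c hc hFc).1 = (Srt.y2, d, c) := rfl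

lemma pair_ub_left {x y n : NN F} (hn : n ∈ upperBounds {x, y}) : x ≤ n :=
  hn (Set.mem_insert _ _)
lemma pair_ub_right {x y n : NN F} (hn : n ∈ upperBounds {x, y}) : y ≤ n :=
  hn (Set.mem_insert_of_mem _ rfl)
lemma pair_lb_left {x y n : NN F} (hn : n ∈ lowerBounds {x, y}) : n ≤ x :=
  hn (Set.mem_insert _ _)
lemma pair_lb_right {x y n : NN F} (hn : n ∈ lowerBounds {x, y}) : n ≤ y :=
  hn (Set.mem_insert_of_mem _ rfl)

lemma mem_pair_ub {x y n : NN F} (h1 : x ≤ n) (h2 : y ≤ n) : n ∈ upperBounds {x, y} := by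
  rintro z hz
  rcases hz with rfl | hz
  · exact h1
  · rcases hz with rfl
    exact h2

lemma mem_pair_lb {x y n : NN F} (h1 : n ≤ x) (h2 : n ≤ y) : n ∈ lowerBounds {x, y} := by
  rintro z hz
  rcases hz with rfl | hz
  · exact h1
  · rcases hz with rfl
    exact h2

/-- step 1 (chain 1) : `e d ⊔ u = w d`, for `d ≠ ⊤`. -/
lemma isLUB_eE_u1 (hbt : (⊥ : L) ≠ ⊤) {d : L} (hd : d ≠ ⊤) :
    IsLUB {eE F d, wd1 F ⊥ hbt} (wd1 F d hd) := by
  constructor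
  · apply mem_pair_ub
    · rw [NN.le_iff, eE_of_ne hd, wd1_val]
      exact ⟨(show Srt.e0 ≤ Srt.w1 by decide), bot_le, le_refl d⟩
    · rw [NN.le_iff, wd1_val, wd1_val]
      exact ⟨le_refl _, bot_le, bot_le⟩
  · intro n hn
    have h1 := pair_ub_left hn
    have h2 := pair_ub_right hn
    rw [NN.le_iff, eE_s hd, eE_b hd, eE_g hd] at h1
    rw [NN.le_iff, wd1_val] at h2
    rcases s_w1_le _ h2.1 with h'' | h''
    · rw [NN.le_iff, wd1_val]
      refine ⟨by rw [h''], ?_, h1.2.2⟩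
      rw [n.2.2.2.2.1 (Or.inl h'')]
      exact h1.2.2
    · have : n = TOPN F := eq_TOPN_of_gamma_top (n.2.2.1 h'').2
      rw [this]
      exact le_TOPN _

lemma s_w2_le : ∀ s : Srt, Srt.w2 ≤ s → s = Srt.w2 ∨ s = Srt.t := by decide

lemma isLUB_eE_u2 (hbt : (⊥ : L) ≠ ⊤) {d : L} (hd : d ≠ ⊤) :
    IsLUB {eE F d, wd2 F ⊥ hbt} (wd2 F d hd) := by
  constructor
  · apply mem_pair_ub
    · rw [NN.le_iff, eE_of_ne hd, wd2_val]
      exact ⟨(show Srt.e0 ≤ Srt.w2 by decide), bot_le, le_refl d⟩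
    · rw [NN.le_iff, wd2_val, wd2_val]
      exact ⟨le_refl _, bot_le, bot_le⟩
  · intro n hn
    have h1 := pair_ub_left hn
    have h2 := pair_ub_right hn
    rw [NN.le_iff, eE_s hd, eE_b hd, eE_g hd] at h1
    rw [NN.le_iff, wd2_val] at h2
    rcases s_w2_le _ h2.1 with h'' | h''
    · rw [NN.le_iff, wd2_val]
      refine ⟨by rw [h''], ?_, h1.2.2⟩
      rw [n.2.2.2.2.1 (Or.inr h'')]
      exact h1.2.2
    · have : n = TOPN F := eq_TOPN_of_gamma_top (n.2.2.1 h'').2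
      rw [this]
      exact le_TOPN _

/-- step 2 : `w d ⊓ v = z d`, where `v = z ⊤`. -/
lemma isGLB_w_v1 (hbt : (⊥ : L) ≠ ⊤) {d : L} (hd : d ≠ ⊤) :
    IsGLB {wd1 F d hd, zd1 F hbt ⊤} (zd1 F hbt d) := by
  constructor
  · apply mem_pair_lb
    · rw [NN.le_iff, zd1_val, wd1_val]
      exact ⟨(show Srt.z1 ≤ Srt.w1 by decide), le_refl d, bot_le⟩
    · rw [NN.le_iff, zd1_val, zd1_val]
      exact ⟨le_refl _, le_top, le_refl _⟩
  · intro n hn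
    have h1 := pair_lb_left hn
    have h2 := pair_lb_right hn
    rw [NN.le_iff, wd1_val] at h1
    rw [NN.le_iff, zd1_val] at h2
    rw [NN.le_iff, zd1_val]
    exact ⟨h2.1, h1.2.1, h2.2.2⟩

lemma isGLB_w_v2 (hbt : (⊥ : L) ≠ ⊤) {d : L} (hd : d ≠ ⊤) :
    IsGLB {wd2 F d hd, zd2 F hbt ⊤} (zd2 F hbt d) := by
  constructor
  · apply mem_pair_lb
    · rw [NN.le_iff, zd2_val, wd2_val]
      exact ⟨(show Srt.z2 ≤ Srt.w2 by decide), le_refl d, bot_le⟩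
    · rw [NN.le_iff, zd2_val, zd2_val]
      exact ⟨le_refl _, le_top, le_refl _⟩
  · intro n hn
    have h1 := pair_lb_left hn
    have h2 := pair_lb_right hn
    rw [NN.le_iff, wd2_val] at h1
    rw [NN.le_iff, zd2_val] at h2
    rw [NN.le_iff, zd2_val]
    exact ⟨h2.1, h1.2.1, h2.2.2⟩

/-- step 3 (no collapse) -/
lemma isLUB_z_u'1 (hF : Monotone F) (hbt : (⊥ : L) ≠ ⊤) (hFb : F ⊥ ≠ ⊤)
    {d : L} (hFd : F d ≠ ⊤) :
    IsLUB {zd1 F hbt d, yd1 F ⊥ (F ⊥) hFb (le_refl _)}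
      (yd1 F d (F d) hFd (le_refl _)) := by
  constructor
  · apply mem_pair_ub
    · rw [NN.le_iff, zd1_val, yd1_val]
      exact ⟨(show Srt.z1 ≤ Srt.y1 by decide), le_refl d, bot_le⟩
    · rw [NN.le_iff, yd1_val, yd1_val]
      exact ⟨le_refl _, bot_le, hF bot_le⟩
  · intro n hn
    have h1 := pair_ub_left hn
    have h2 := pair_ub_right hn
    rw [NN.le_iff, zd1_val] at h1
    rw [NN.le_iff, yd1_val] at h2
    rcases s_z1y1 _ h1.1 h2.1 with h'' | h''
    · rw [NN.le_iff, yd1_val]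
      refine ⟨by rw [h''], h1.2.1, ?_⟩
      exact le_trans (hF h1.2.1) (n.2.2.2.2.2 (Or.inl h''))
    · have : n = TOPN F := eq_TOPN_of_gamma_top (n.2.2.1 h'').2
      rw [this]
      exact le_TOPN _

lemma isLUB_z_u'2 (hF : Monotone F) (hbt : (⊥ : L) ≠ ⊤) (hFb : F ⊥ ≠ ⊤)
    {d : L} (hFd : F d ≠ ⊤) :
    IsLUB {zd2 F hbt d, yd2 F ⊥ (F ⊥) hFb (le_refl _)}
      (yd2 F d (F d) hFd (le_refl _)) := by
  constructor
  · apply mem_pair_ub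
    · rw [NN.le_iff, zd2_val, yd2_val]
      exact ⟨(show Srt.z2 ≤ Srt.y2 by decide), le_refl d, bot_le⟩
    · rw [NN.le_iff, yd2_val, yd2_val]
      exact ⟨le_refl _, bot_le, hF bot_le⟩
  · intro n hn
    have h1 := pair_ub_left hn
    have h2 := pair_ub_right hn
    rw [NN.le_iff, zd2_val] at h1
    rw [NN.le_iff, yd2_val] at h2
    rcases s_z2y2 _ h1.1 h2.1 with h'' | h''
    · rw [NN.le_iff, yd2_val]
      refine ⟨by rw [h''], h1.2.1, ?_⟩
      exact le_trans (hF h1.2.1) (n.2.2.2.2.2 (Or.inr h''))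
    · have : n = TOPN F := eq_TOPN_of_gamma_top (n.2.2.1 h'').2
      rw [this]
      exact le_TOPN _

/-- step 3 (collapse) -/
lemma isLUB_z_u'_top1 (hF : Monotone F) (hbt : (⊥ : L) ≠ ⊤) (hFb : F ⊥ ≠ ⊤)
    {d : L} (hFd : F d = ⊤) :
    IsLUB {zd1 F hbt d, yd1 F ⊥ (F ⊥) hFb (le_refl _)} (TOPN F) := by
  constructor
  · exact mem_pair_ub (le_TOPN _) (le_TOPN _)
  · intro n hn
    have h1 := pair_ub_left hn
    have h2 := pair_ub_right hn
    rw [NN.le_iff, zd1_val] at h1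
    rw [NN.le_iff, yd1_val] at h2
    rcases s_z1y1 _ h1.1 h2.1 with h'' | h''
    · exfalso
      have h6 : F d ≤ n.1.2.2 := le_trans (hF h1.2.1) (n.2.2.2.2.2 (Or.inl h''))
      have h7 : n.1.2.2 = ⊤ := top_le_iff.mp (hFd ▸ h6)
      have h8 := n.2.1 h7
      rw [h8] at h''
      exact Srt.noConfusion h''
    · have : n = TOPN F := eq_TOPN_of_gamma_top (n.2.2.1 h'').2
      exact this.ge

lemma isLUB_z_u'_top2 (hF : Monotone F) (hbt : (⊥ : L) ≠ ⊤) (hFb : F ⊥ ≠ ⊤)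
    {d : L} (hFd : F d = ⊤) :
    IsLUB {zd2 F hbt d, yd2 F ⊥ (F ⊥) hFb (le_refl _)} (TOPN F) := by
  constructor
  · exact mem_pair_ub (le_TOPN _) (le_TOPN _)
  · intro n hn
    have h1 := pair_ub_left hn
    have h2 := pair_ub_right hn
    rw [NN.le_iff, zd2_val] at h1
    rw [NN.le_iff, yd2_val] at h2
    rcases s_z2y2 _ h1.1 h2.1 with h'' | h''
    · exfalso
      have h6 : F d ≤ n.1.2.2 := le_trans (hF h1.2.1) (n.2.2.2.2.2 (Or.inr h''))
      have h7 : n.1.2.2 = ⊤ := top_le_iff.mp (hFd ▸ h6)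
      have h8 := n.2.1 h7
      rw [h8] at h''
      exact Srt.noConfusion h''
    · have : n = TOPN F := eq_TOPN_of_gamma_top (n.2.2.1 h'').2
      exact this.ge

/-- final step : `y¹ (d, c) ⊓ y² (d, c) = e c`. -/
lemma isGLB_yy {d c : L} (hc : c ≠ ⊤) (h1 : F d ≤ c) :
    IsGLB {yd1 F d c hc h1, yd2 F d c hc h1} (eE F c) := by
  constructor
  · apply mem_pair_lb
    · rw [NN.le_iff, eE_s hc, eE_b hc, eE_g hc, yd1_val]
      exact ⟨(show Srt.e0 ≤ Srt.y1 by decide), bot_le, le_refl _⟩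
    · rw [NN.le_iff, eE_s hc, eE_b hc, eE_g hc, yd2_val]
      exact ⟨(show Srt.e0 ≤ Srt.y2 by decide), bot_le, le_refl _⟩
  · intro n hn
    have hl := pair_lb_left hn
    have hr := pair_lb_right hn
    rw [NN.le_iff, yd1_val] at hl
    rw [NN.le_iff, yd2_val] at hr
    have hse : n.1.1 = Srt.e0 := s_y1y2 _ hl.1 hr.1
    rw [NN.le_iff, eE_s hc, eE_b hc, eE_g hc]
    refine ⟨by rw [hse], by rw [n.2.2.2.1 hse], hl.2.2⟩

end CoreN3

section CoreN4

variable {L : Type u} [Lattice L] [BoundedOrder L] {F : L → L}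

lemma isLUB_eE_pair {a b : L} (ha : a ≠ ⊤) (hb : b ≠ ⊤) (hab : a ⊔ b ≠ ⊤) :
    IsLUB {eE F a, eE F b} (eE F (a ⊔ b)) := by
  constructor
  · exact mem_pair_ub (eE_mono le_sup_left) (eE_mono le_sup_right)
  · intro n hn
    have h1 := pair_ub_left hn
    have h2 := pair_ub_right hn
    rw [NN.le_iff, eE_s ha, eE_b ha, eE_g ha] at h1
    rw [NN.le_iff, eE_s hb, eE_b hb, eE_g hb] at h2
    rw [NN.le_iff, eE_s hab, eE_b hab, eE_g hab]
    exact ⟨h1.1, h1.2.1, sup_le h1.2.2 h2.2.2⟩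

lemma isLUB_eE_pair_top {a b : L} (ha : a ≠ ⊤) (hb : b ≠ ⊤) (hab : a ⊔ b = ⊤) :
    IsLUB {eE F a, eE F b} (TOPN F) := by
  constructor
  · exact mem_pair_ub (le_TOPN _) (le_TOPN _)
  · intro n hn
    have h1 := pair_ub_left hn
    have h2 := pair_ub_right hn
    rw [NN.le_iff, eE_s ha, eE_b ha, eE_g ha] at h1
    rw [NN.le_iff, eE_s hb, eE_b hb, eE_g hb] at h2
    have hg : n.1.2.2 = ⊤ := top_le_iff.mp (hab ▸ sup_le h1.2.2 h2.2.2)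
    exact (eq_TOPN_of_gamma_top hg).ge

lemma isGLB_eE_pair {a b : L} (ha : a ≠ ⊤) :
    IsGLB {eE F a, eE F b} (eE F (a ⊓ b)) := by
  constructor
  · exact mem_pair_lb (eE_mono inf_le_left) (eE_mono inf_le_right)
  · intro n hn
    have h1 := pair_lb_left hn
    have h2 := pair_lb_right hn
    have hab : a ⊓ b ≠ ⊤ := fun hh => ha (top_le_iff.mp (hh ▸ inf_le_left))
    rw [NN.le_iff, eE_s ha, eE_b ha, eE_g ha] at h1
    have hgb : n.1.2.2 ≤ b := by
      by_cases hb : b = ⊤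
      · rw [hb]; exact le_top
      · rw [NN.le_iff, eE_s hb, eE_b hb, eE_g hb] at h2
        exact h2.2.2
    rw [NN.le_iff, eE_s hab, eE_b hab, eE_g hab]
    exact ⟨h1.1, h1.2.1, le_inf h1.2.2 hgb⟩

lemma eE_inj : Function.Injective (eE F) := by
  intro a b h
  by_cases ha : a = ⊤ <;> by_cases hb : b = ⊤
  · rw [ha, hb]
  · exfalso
    have h1 : (eE F a).1.1 = (eE F b).1.1 := by rw [h]
    rw [ha, eE_top] at h1
    rw [eE_s hb] at h1
    exact Srt.noConfusion h1
  · exfalso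
    have h1 : (eE F a).1.1 = (eE F b).1.1 := by rw [h]
    rw [hb, eE_top] at h1
    rw [eE_s ha] at h1
    exact Srt.noConfusion h1
  · have h1 : (eE F a).1.2.2 = (eE F b).1.2.2 := by rw [h]
    rw [eE_g ha, eE_g hb] at h1
    exact h1

lemma eE_endext (n : NN F) (a : L) (ha : a ≠ ⊤) (h : n ≤ eE F a) :
    ∃ c : L, eE F c = n := by
  rw [NN.le_iff, eE_s ha, eE_b ha, eE_g ha] at h
  have hse : n.1.1 = Srt.e0 := s_le_e0 _ h.1
  have hb : n.1.2.1 = ⊥ := n.2.2.2.1 hse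
  have hgt : n.1.2.2 ≠ ⊤ := by
    intro hh
    have h2 := n.2.1 hh
    rw [h2] at hse
    exact Srt.noConfusion hse
  refine ⟨n.1.2.2, Subtype.ext ?_⟩
  rw [eE_of_ne hgt, ← hse, ← hb]

end CoreN4

theorem core_construction {L : Type u} [Lattice L] [BoundedOrder L] (hL : OrderComplete L)
    (D : Set L) (f : D → L) (hf : ∀ x y : D, (x : L) ≤ (y : L) → f x ≤ f y) :
    ∃ (M : Type u) (_ : Lattice M) (_ : BoundedOrder M) (e : L → M),
      IsBddLatticeEmbedding e ∧ OrderComplete M ∧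
      (∀ (b : M) (a : L), a ≠ ⊤ → b ≤ e a → ∃ c : L, e c = b) ∧
      ∃ p : (Fin 1 → M) → M, IsPolyFn M 1 p ∧ ∀ a : D, p (fun _ => e a) = e (f a) := by
  classical
  set F : L → L := fun a => (hL {y | ∃ d : D, (d : L) ≤ a ∧ f d = y}).1.choose with hFdef
  have hFlub : ∀ a, IsLUB {y | ∃ d : D, (d : L) ≤ a ∧ f d = y} (F a) :=
    fun a => (hL _).1.choose_spec
  have hF : Monotone F := by
    intro a b hab
    refine (hFlub a).2 (fun y hy => (hFlub b).1 ?_)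
    obtain ⟨d, hd, rfl⟩ := hy
    exact ⟨d, le_trans hd hab, rfl⟩
  have hFd : ∀ d : D, F (d : L) = f d := by
    intro d
    refine le_antisymm ?_ ?_
    · refine (hFlub _).2 (fun y hy => ?_)
      obtain ⟨d', hd', rfl⟩ := hy
      exact hf d' d hd'
    · exact (hFlub _).1 ⟨d, le_refl _, rfl⟩
  by_cases htriv : (⊥ : L) = ⊤
  · have hsub : ∀ x y : L, x = y := by
      intro x y
      have h1 : (⊤ : L) ≤ ⊥ := htriv.ge
      exact le_antisymm (le_trans le_top (le_trans h1 bot_le))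
        (le_trans le_top (le_trans h1 bot_le))
    exact ⟨L, inferInstance, inferInstance, id,
      ⟨fun a b h => h, fun _ _ => rfl, fun _ _ => rfl, rfl, rfl⟩, hL,
      fun b a _ _ => ⟨b, rfl⟩,
      ⟨fun v => v 0, IsPolyFn.proj 0, fun a => hsub _ _⟩⟩
  · by_cases hFb : F ⊥ = ⊤
    · have hfa : ∀ a : D, f a = ⊤ := by
        intro a
        have h1 : F ⊥ ≤ f a := by
          refine (hFlub ⊥).2 (fun y hy => ?_)
          obtain ⟨d, hd, rfl⟩ := hy
          exact hf d a (le_trans hd bot_le)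
        exact top_le_iff.mp (hFb ▸ h1)
      exact ⟨L, inferInstance, inferInstance, id,
        ⟨fun a b h => h, fun _ _ => rfl, fun _ _ => rfl, rfl, rfl⟩, hL,
        fun b a _ _ => ⟨b, rfl⟩,
        ⟨fun _ => (⊤ : L), IsPolyFn.const ⊤, fun a => (hfa a).symm⟩⟩
    · -- main construction
      set J : Set L → L := fun S => (hL S).2.choose with hJdef
      have hJg : ∀ S : Set L, IsGLB S (J S) := fun S => (hL S).2.choose_spec
      letI : InfSet (NN F) := ⟨SInfN hF J hJg⟩
      letI instCL : CompleteLattice (NN F) :=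
        completeLatticeOfInf (NN F) (fun T => SInfN_isGLB hF J hJg T)
      have hTOP : TOPN F = (⊤ : NN F) := le_antisymm le_top (le_TOPN ⊤)
      have hBOTle : ∀ n : NN F, eE F ⊥ ≤ n := by
        intro n
        rw [NN.le_iff, eE_s htriv, eE_b htriv, eE_g htriv]
        exact ⟨s_bot _, bot_le, bot_le⟩
      have hBOT : eE F ⊥ = (⊥ : NN F) := le_antisymm (hBOTle ⊥) bot_le
      refine ⟨NN F, instCL.toLattice, inferInstance, eE F, ⟨eE_inj, ?_, ?_, hBOT, eE_top.trans hTOP⟩,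
        ?_, fun b a ha h => eE_endext b a ha h, ?_⟩
      · -- sup preservation
        intro a b
        by_cases ha : a = ⊤
        · rw [ha, eE_top, hTOP, top_sup_eq, top_sup_eq, eE_top, hTOP]
        · by_cases hb : b = ⊤
          · rw [hb, eE_top, hTOP, sup_top_eq, sup_top_eq, eE_top, hTOP]
          · by_cases hab : a ⊔ b = ⊤
            · have h1 : eE F a ⊔ eE F b = TOPN F :=
                isLUB_pair.unique (isLUB_eE_pair_top ha hb hab)
              rw [hab, eE_top, hTOP, h1, hTOP]
            · exact ((isLUB_eE_pair ha hb hab).unique isLUB_pair)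
      · -- inf preservation
        intro a b
        by_cases ha : a = ⊤
        · rw [ha, eE_top, hTOP, top_inf_eq, top_inf_eq]
        · exact ((isGLB_eE_pair ha).unique isGLB_pair)
      · -- order completeness
        intro S
        exact ⟨⟨sSup S, isLUB_sSup S⟩, ⟨sInf S, isGLB_sInf S⟩⟩
      · -- the polynomial
        set u1 : NN F := wd1 F ⊥ htriv with hu1
        set v1 : NN F := zd1 F htriv ⊤ with hv1
        set w1 : NN F := yd1 F ⊥ (F ⊥) hFb (le_refl _) with hw1
        set u2 : NN F := wd2 F ⊥ htriv with hu2
        set v2 : NN F := zd2 F htriv ⊤ with hv2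
        set w2 : NN F := yd2 F ⊥ (F ⊥) hFb (le_refl _) with hw2
        refine ⟨fun x => (((x 0 ⊔ u1) ⊓ v1) ⊔ w1) ⊓ (((x 0 ⊔ u2) ⊓ v2) ⊔ w2), ?_, ?_⟩
        · exact IsPolyFn.inf
            (IsPolyFn.sup (IsPolyFn.inf (IsPolyFn.sup (IsPolyFn.proj 0) (IsPolyFn.const u1))
              (IsPolyFn.const v1)) (IsPolyFn.const w1))
            (IsPolyFn.sup (IsPolyFn.inf (IsPolyFn.sup (IsPolyFn.proj 0) (IsPolyFn.const u2))
              (IsPolyFn.const v2)) (IsPolyFn.const w2))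
        · intro a
          have stepA1 : (eE F (a : L) ⊔ u1) ⊓ v1 = zd1 F htriv (a : L) := by
            by_cases hd : (a : L) = ⊤
            · rw [hd, eE_top, hTOP, top_sup_eq, top_inf_eq]
            · have e1 : eE F (a : L) ⊔ u1 = wd1 F (a : L) hd :=
                isLUB_pair.unique (isLUB_eE_u1 htriv hd)
              have e2 : wd1 F (a : L) hd ⊓ v1 = zd1 F htriv (a : L) :=
                isGLB_pair.unique (isGLB_w_v1 htriv hd)
              rw [e1, e2]
          have stepA2 : (eE F (a : L) ⊔ u2) ⊓ v2 = zd2 F htriv (a : L) := by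
            by_cases hd : (a : L) = ⊤
            · rw [hd, eE_top, hTOP, top_sup_eq, top_inf_eq]
            · have e1 : eE F (a : L) ⊔ u2 = wd2 F (a : L) hd :=
                isLUB_pair.unique (isLUB_eE_u2 htriv hd)
              have e2 : wd2 F (a : L) hd ⊓ v2 = zd2 F htriv (a : L) :=
                isGLB_pair.unique (isGLB_w_v2 htriv hd)
              rw [e1, e2]
          show (((eE F (a : L) ⊔ u1) ⊓ v1) ⊔ w1) ⊓ (((eE F (a : L) ⊔ u2) ⊓ v2) ⊔ w2) = eE F (f a)
          rw [stepA1, stepA2]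
          by_cases hFdT : F (a : L) = ⊤
          · have b1 : zd1 F htriv (a : L) ⊔ w1 = (⊤ : NN F) :=
              (isLUB_pair.unique (isLUB_z_u'_top1 hF htriv hFb hFdT)).trans hTOP
            have b2 : zd2 F htriv (a : L) ⊔ w2 = (⊤ : NN F) :=
              (isLUB_pair.unique (isLUB_z_u'_top2 hF htriv hFb hFdT)).trans hTOP
            rw [b1, b2, top_inf_eq]
            rw [← hFd a, hFdT, eE_top, hTOP]
          · have b1 : zd1 F htriv (a : L) ⊔ w1 = yd1 F (a : L) (F (a : L)) hFdT (le_refl _) :=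
              isLUB_pair.unique (isLUB_z_u'1 hF htriv hFb hFdT)
            have b2 : zd2 F htriv (a : L) ⊔ w2 = yd2 F (a : L) (F (a : L)) hFdT (le_refl _) :=
              isLUB_pair.unique (isLUB_z_u'2 hF htriv hFb hFdT)
            rw [b1, b2, isGLB_pair.unique (isGLB_yy hFdT (le_refl _)), hFd a]

/-! ### The Dedekind–MacNeille completion -/

section MacNeille

variable {L : Type u} [Lattice L] [BoundedOrder L]

def MacCl (A : Set L) : Set L := lowerBounds (upperBounds A)

lemma subset_MacCl (A : Set L) : A ⊆ MacCl A := fun _ ha _ hu => hu ha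

lemma MacCl_mono {A B : Set L} (h : A ⊆ B) : MacCl A ⊆ MacCl B :=
  fun _ hx _ hu => hx (fun _ ha => hu (h ha))

def Mac (L : Type u) [Lattice L] [BoundedOrder L] : Type u := {A : Set L // MacCl A = A}

instance : PartialOrder (Mac L) := inferInstanceAs (PartialOrder {A : Set L // MacCl A = A})

lemma Mac.mem_of_le {C : Mac L} {y z : L} (h : y ≤ z) (hz : z ∈ C.1) : y ∈ C.1 := by
  rw [← C.2] at hz ⊢
  exact fun u hu => le_trans h (hz hu)

lemma Mac.sup_mem {C : Mac L} {a b : L} (ha : a ∈ C.1) (hb : b ∈ C.1) : a ⊔ b ∈ C.1 := by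
  rw [← C.2]
  exact fun u hu => sup_le (hu ha) (hu hb)

lemma Mac.bot_mem (C : Mac L) : (⊥ : L) ∈ C.1 := by
  rw [← C.2]
  exact fun u _ => bot_le

lemma MacInf_closed (T : Set (Mac L)) :
    MacCl {y | ∀ x ∈ T, y ∈ (x : Mac L).1} = {y | ∀ x ∈ T, y ∈ (x : Mac L).1} := by
  apply Set.Subset.antisymm
  · intro z hz x hx
    have h1 : {y | ∀ x ∈ T, y ∈ (x : Mac L).1} ⊆ x.1 := fun y hy => hy x hx
    have h2 := MacCl_mono h1 hz
    rw [x.2] at h2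
    exact h2
  · exact subset_MacCl _

noncomputable instance : InfSet (Mac L) :=
  ⟨fun T => ⟨{y | ∀ x ∈ T, y ∈ (x : Mac L).1}, MacInf_closed T⟩⟩

lemma Mac_isGLB (T : Set (Mac L)) : IsGLB T (sInf T) := by
  constructor
  · intro x hx
    exact fun y hy => hy x hx
  · intro ℓ hℓ y hy x hx
    exact hℓ hx hy

noncomputable instance : CompleteLattice (Mac L) := completeLatticeOfInf _ Mac_isGLB

def macE (a : L) : Mac L :=
  ⟨Set.Iic a, by rw [MacCl, upperBounds_Iic, lowerBounds_Ici]⟩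

lemma macE_le_iff {a b : L} : macE a ≤ macE b ↔ a ≤ b := by
  constructor
  · intro h
    exact Set.mem_Iic.mp (h (Set.mem_Iic.mpr (le_refl a)))
  · intro h y hy
    exact Set.mem_Iic.mpr (le_trans (Set.mem_Iic.mp hy) h)

lemma macE_mono {a b : L} (h : a ≤ b) : macE a ≤ macE b := macE_le_iff.mpr h

lemma macE_inj : Function.Injective (macE (L := L)) := by
  intro a b h
  exact le_antisymm (macE_le_iff.mp h.le) (macE_le_iff.mp h.ge)

lemma macE_sup (a b : L) : macE (a ⊔ b) = macE a ⊔ macE b := by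
  apply le_antisymm
  · have ha : a ∈ (macE a ⊔ macE b : Mac L).1 :=
      (le_sup_left : macE a ≤ macE a ⊔ macE b) (Set.mem_Iic.mpr (le_refl a))
    have hb : b ∈ (macE a ⊔ macE b : Mac L).1 :=
      (le_sup_right : macE b ≤ macE a ⊔ macE b) (Set.mem_Iic.mpr (le_refl b))
    have hab := Mac.sup_mem ha hb
    intro y hy
    exact Mac.mem_of_le (Set.mem_Iic.mp hy) hab
  · exact sup_le (macE_mono le_sup_left) (macE_mono le_sup_right)

lemma macE_inf (a b : L) : macE (a ⊓ b) = macE a ⊓ macE b := by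
  apply le_antisymm
  · exact le_inf (macE_mono inf_le_left) (macE_mono inf_le_right)
  · intro y hy
    have h1 : y ∈ (macE a).1 := (inf_le_left : macE a ⊓ macE b ≤ macE a) hy
    have h2 : y ∈ (macE b).1 := (inf_le_right : macE a ⊓ macE b ≤ macE b) hy
    exact Set.mem_Iic.mpr (le_inf (Set.mem_Iic.mp h1) (Set.mem_Iic.mp h2))

lemma macE_bot : macE (⊥ : L) = ⊥ := by
  have h : ∀ C : Mac L, macE ⊥ ≤ C := by
    intro C y hy
    exact Mac.mem_of_le (Set.mem_Iic.mp hy) (Mac.bot_mem C)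
  exact le_antisymm (h ⊥) bot_le

lemma macE_top : macE (⊤ : L) = ⊤ := by
  have h : ∀ C : Mac L, C ≤ macE ⊤ := by
    intro C y _
    exact Set.mem_Iic.mpr le_top
  exact le_antisymm le_top (h ⊤)

lemma Mac_orderComplete : OrderComplete (Mac L) :=
  fun S => ⟨⟨sSup S, isLUB_sSup S⟩, ⟨sInf S, isGLB_sInf S⟩⟩

end MacNeille

/-- Every monotone partial function `f : D → L` on a bounded lattice `L` becomes the
restriction of a unary polynomial function in a suitable bounded lattice extension `L'`
of `L`; moreover, if `L` is complete, `L'` can be chosen complete and an end extension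
of `L`. -/
theorem monotone_partial_function_polynomial_extension (L : Type u) [Lattice L]
    [BoundedOrder L] (D : Set L) (f : D → L)
    (hf : ∀ x y : D, (x : L) ≤ (y : L) → f x ≤ f y) :
    (∃ (M : Type u) (_ : Lattice M) (_ : BoundedOrder M) (e : L → M),
        IsBddLatticeEmbedding e ∧
        ∃ p : (Fin 1 → M) → M, IsPolyFn M 1 p ∧
          ∀ a : D, p (fun _ => e a) = e (f a)) ∧
    (OrderComplete L →
      ∃ (M : Type u) (_ : Lattice M) (_ : BoundedOrder M) (e : L → M),
        IsBddLatticeEmbedding e ∧ OrderComplete M ∧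
        (∀ (b : M) (a : L), a ≠ ⊤ → b ≤ e a → ∃ c : L, e c = b) ∧
        ∃ p : (Fin 1 → M) → M, IsPolyFn M 1 p ∧
          ∀ a : D, p (fun _ => e a) = e (f a)) := by
  constructor
  · -- general case: first embed into the Dedekind–MacNeille completion
    classical
    set D' : Set (Mac L) := (fun a => macE a) '' D with hD'
    have hgetd : ∀ x : D', ∃ d : D, macE (d : L) = (x : Mac L) := by
      intro x
      obtain ⟨d, hd, he⟩ := x.2
      exact ⟨⟨d, hd⟩, he⟩
    set f' : D' → Mac L := fun x => macE (f (hgetd x).choose) with hf'def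
    have hf'mono : ∀ x y : D', (x : Mac L) ≤ (y : Mac L) → f' x ≤ f' y := by
      intro x y hxy
      have hx := (hgetd x).choose_spec
      have hy := (hgetd y).choose_spec
      have hdd : (((hgetd x).choose : D) : L) ≤ ((hgetd y).choose : L) := by
        apply macE_le_iff.mp
        rw [hx, hy]
        exact hxy
      exact macE_mono (hf _ _ hdd)
    obtain ⟨M, iM, bM, e', he', _, _, p, hp, heval⟩ :=
      core_construction Mac_orderComplete D' f' hf'mono
    obtain ⟨hinj, hsup, hinf, hbot, htop⟩ := he'
    refine ⟨M, iM, bM, fun a => e' (macE a),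
      ⟨fun a b h => macE_inj (hinj h),
       fun a b => by show e' (macE (a ⊔ b)) = e' (macE a) ⊔ e' (macE b); rw [macE_sup, hsup],
       fun a b => by show e' (macE (a ⊓ b)) = e' (macE a) ⊓ e' (macE b); rw [macE_inf, hinf],
       by show e' (macE (⊥ : L)) = ⊥; rw [macE_bot, hbot],
       by show e' (macE (⊤ : L)) = ⊤; rw [macE_top, htop]⟩, p, hp, ?_⟩
    intro a
    have hmem : macE (a : L) ∈ D' := ⟨(a : L), a.2, rfl⟩
    have h1 := heval ⟨macE (a : L), hmem⟩
    have h2 : f' ⟨macE (a : L), hmem⟩ = macE (f a) := by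
      have hspec := (hgetd ⟨macE (a : L), hmem⟩).choose_spec
      have hch : (hgetd ⟨macE (a : L), hmem⟩).choose = a :=
        Subtype.ext (macE_inj hspec)
      rw [hf'def]
      simp only
      rw [hch]
    rw [h2] at h1
    exact h1
  · intro hc
    exact core_construction hc D f hf
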